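/- For every ε > 0, there exist a finite nilpotent group G and a subgroup H of G such that o(G)/o(H) < ε. In other words, 0 is an adherent point of the set of ratios o(G)/o(H) with G finite nilpotent and H a subgroup of G. -/

import Mathlib

open Filter Topology

/-- The average order of the elements of a finite group `G`:
`o(G) = (1/|G|) * ∑_{x ∈ G} |x|`. -/
noncomputable def avgOrder (G : Type*) [Group G] : ℝ :=
  (∑ᶠ x : G, (orderOf x : ℝ)) / (Nat.card G)

namespace AvgOrderNilpotentAux

open Polynomial SemidirectProduct Subgroup

/-- `AddAut A` as `MulAut (Multiplicative A)`. -/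
def addAutToMulAut (A : Type) [AddGroup A] : Multiplicative (AddAut A) →* MulAut (Multiplicative A) where
  toFun e := AddEquiv.toMultiplicative (Multiplicative.toAdd e)
  map_one' := rfl
  map_mul' _ _ := rfl

variable (t : ℕ)

/-- characteristic -/
def qq : ℕ := 2 ^ (2 * t)

/-- `x ^ MM = -1` -/
def MM : ℕ := 2 ^ t

lemma qq_pos : 0 < qq t := Nat.pow_pos (by norm_num)

lemma MM_pos : 0 < MM t := Nat.pow_pos (by norm_num)

lemma MM_ne_zero : MM t ≠ 0 := Nat.pos_iff_ne_zero.mp (MM_pos t)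

lemma one_lt_qq (ht : 1 ≤ t) : 1 < qq t :=
  lt_of_lt_of_le (by norm_num) (Nat.pow_le_pow_right (by norm_num) (by omega) :
    2 ^ 1 ≤ 2 ^ (2 * t))

/-- the defining polynomial -/
noncomputable def f : (ZMod (qq t))[X] := X ^ (MM t) + C 1

lemma f_def : f t = X ^ (MM t) + C 1 := rfl

lemma f_monic : (f t).Monic := monic_X_pow_add_C _ (MM_ne_zero t)

/-- the ring `(Z/2^(2t))[x]/(x^(2^t)+1)` -/
abbrev Rr : Type := AdjoinRoot (f t)

lemma root_pow_M : (AdjoinRoot.root (f t)) ^ (MM t) = -1 := by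
  have h : AdjoinRoot.mk (f t) (X ^ (MM t) + C 1) = 0 := AdjoinRoot.mk_self
  rw [map_add, map_pow, AdjoinRoot.mk_X, AdjoinRoot.mk_C, map_one] at h
  linear_combination h

lemma algebraMap_injective (ht : 1 ≤ t) :
    Function.Injective (algebraMap (ZMod (qq t)) (Rr t)) := by
  haveI : Fact (1 < qq t) := ⟨one_lt_qq t ht⟩
  rw [injective_iff_map_eq_zero]
  intro a ha
  by_contra hne
  rw [AdjoinRoot.algebraMap_eq] at ha
  have hdeg : (C a).degree < (f t).degree := by
    rw [f_def, degree_X_pow_add_C (MM_pos t)]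
    refine lt_of_le_of_lt degree_C_le ?_
    exact_mod_cast MM_pos t
  exact AdjoinRoot.mk_ne_zero_of_degree_lt (f_monic t) (C_ne_zero.mpr hne) hdeg ha

lemma charR (ht : 1 ≤ t) : CharP (Rr t) (qq t) :=
  charP_of_injective_algebraMap (algebraMap_injective t ht) (qq t)

lemma finR : Finite (Rr t) := by
  haveI : NeZero (qq t) := ⟨(qq_pos t).ne'⟩
  let pb := AdjoinRoot.powerBasis' (f_monic t)
  exact Finite.of_equiv _ (pb.basis.repr.toEquiv.trans (Finsupp.equivFunOnFinite)).symm

section Units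

lemma root_mul_inv :
    AdjoinRoot.root (f t) * (AdjoinRoot.root (f t)) ^ (2 * MM t - 1) = 1 := by
  have h1 : 1 + (2 * MM t - 1) = 2 * MM t := by have := MM_pos t; omega
  calc AdjoinRoot.root (f t) * (AdjoinRoot.root (f t)) ^ (2 * MM t - 1)
      = (AdjoinRoot.root (f t)) ^ (1 + (2 * MM t - 1)) := by rw [pow_add, pow_one]
    _ = ((AdjoinRoot.root (f t)) ^ (MM t)) ^ 2 := by rw [← pow_mul]; congr 1; omega
    _ = 1 := by rw [root_pow_M]; ring

/-- the distinguished unit `x` -/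
noncomputable def w : (Rr t)ˣ := Units.mkOfMulEqOne _ _ (root_mul_inv t)

lemma w_val : ((w t : (Rr t)ˣ) : Rr t) = AdjoinRoot.root (f t) := rfl

lemma neg_one_ne_one (ht : 1 ≤ t) : (-1 : (Rr t)ˣ) ≠ 1 := by
  haveI := charR t ht
  intro h
  have h2 : ((-1 : (Rr t)ˣ) : Rr t) = ((1 : (Rr t)ˣ) : Rr t) := by rw [h]
  rw [Units.val_neg, Units.val_one] at h2
  have h3 : (2 : Rr t) = 0 := by linear_combination -h2
  have h4 : ((2 : ℕ) : Rr t) = 0 := by push_cast; exact h3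
  rw [CharP.cast_eq_zero_iff (Rr t) (qq t)] at h4
  have := Nat.le_of_dvd (by norm_num) h4
  have : 4 ≤ qq t := by
    calc 4 = 2 ^ 2 := by norm_num
    _ ≤ 2 ^ (2 * t) := Nat.pow_le_pow_right (by norm_num) (by omega)
  omega

lemma w_pow_M : (w t) ^ (MM t) = -1 := by
  ext
  rw [Units.val_pow_eq_pow_val, w_val, root_pow_M, Units.val_neg, Units.val_one]

lemma w_pow_2M : (w t) ^ (2 ^ (t + 1)) = 1 := by
  have : (2 : ℕ) ^ (t + 1) = MM t * 2 := by rw [MM]; ring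
  rw [this, pow_mul, w_pow_M]
  ext; push_cast; ring

lemma orderOf_w (ht : 1 ≤ t) : orderOf (w t) = 2 ^ (t + 1) := by
  have hdvd : orderOf (w t) ∣ 2 ^ (t + 1) := orderOf_dvd_of_pow_eq_one (w_pow_2M t)
  obtain ⟨d, hd, hord⟩ := (Nat.dvd_prime_pow Nat.prime_two).mp hdvd
  rcases Nat.lt_or_ge d (t + 1) with hlt | hge
  · exfalso
    have hdt : d ≤ t := by omega
    have : (w t) ^ (2 ^ t) = 1 := by
      have h2 : (2 : ℕ) ^ t = 2 ^ d * 2 ^ (t - d) := by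
        rw [← pow_add]; congr 1; omega
      rw [h2, pow_mul, ← hord, pow_orderOf_eq_one, one_pow]
    rw [show (2:ℕ) ^ t = MM t from rfl, w_pow_M t] at this
    exact neg_one_ne_one t ht this
  · rw [hord]; congr 1; omega

/-- the acting cyclic group -/
noncomputable def Cgrp : Subgroup (Rr t)ˣ := Subgroup.zpowers (w t)

lemma finRr : Finite (Rr t) := finR t

lemma involution_eq_neg_one (ht : 1 ≤ t) (h : (Rr t)ˣ) (hmem : h ∈ Cgrp t)
    (hsq : h ^ 2 = 1) (hne : h ≠ 1) : h = -1 := by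
  haveI : Finite (Rr t) := finR t
  haveI : Finite (Rr t)ˣ := inferInstance
  obtain ⟨k, rfl⟩ := mem_powers_iff_mem_zpowers.mpr hmem
  have h1 : (w t) ^ (2 * k) = 1 := by rw [mul_comm, pow_mul]; exact hsq
  have h2 : 2 ^ (t + 1) ∣ 2 * k := by rw [← orderOf_w t ht]; exact orderOf_dvd_of_pow_eq_one h1
  have h3 : 2 ^ t ∣ k := by
    rcases h2 with ⟨c, hc⟩
    refine ⟨c, ?_⟩
    have : 2 * k = 2 * (2 ^ t * c) := by rw [hc, pow_succ]; ring
    omega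
  obtain ⟨s, rfl⟩ := h3
  have hne' : (w t) ^ (2 ^ t * s) ≠ 1 := hne
  rw [pow_mul, show (2:ℕ) ^ t = MM t from rfl, w_pow_M t] at hne'
  show (w t) ^ (2 ^ t * s) = -1
  rw [pow_mul, show (2:ℕ) ^ t = MM t from rfl, w_pow_M t]
  rcases Nat.even_or_odd s with he | ho
  · exact absurd he.neg_one_pow hne'
  · exact ho.neg_one_pow

end Units

section GroupDef

/-- the action of the cyclic group on the ring -/
noncomputable def phi : ↥(Cgrp t) →* MulAut (Multiplicative (Rr t)) :=
  (addAutToMulAut (Rr t)).comp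
    ((DistribMulAction.toAddAut (Rr t)ˣ (Rr t)).comp (Cgrp t).subtype)

/-- the 2-group -/
noncomputable abbrev Gg : Type := Multiplicative (Rr t) ⋊[phi t] ↥(Cgrp t)

lemma phi_apply (g : ↥(Cgrp t)) (b : Multiplicative (Rr t)) :
    phi t g b = Multiplicative.ofAdd (((g : (Rr t)ˣ) : Rr t) * (Multiplicative.toAdd b)) :=
  rfl

lemma mul_eq (b c : Multiplicative (Rr t)) (g h : ↥(Cgrp t)) :
    (⟨b, g⟩ : Gg t) * ⟨c, h⟩ = ⟨b * phi t g c, g * h⟩ := rfl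

lemma key_pow (d : ℕ) : ∀ (g : ↥(Cgrp t)) (b : Multiplicative (Rr t)),
    (g : (Rr t)ˣ) ^ (2 ^ d) = -1 →
    (⟨b, g⟩ : Gg t) ^ (2 ^ (d + 1)) = 1 := by
  induction d with
  | zero =>
    intro g b hg
    have hgv : ((g : (Rr t)ˣ) : Rr t) = -1 := by
      have : (g : (Rr t)ˣ) = -1 := by simpa using hg
      rw [this, Units.val_neg, Units.val_one]
    have hsq : (⟨b, g⟩ : Gg t) ^ 2 = 1 := by
      rw [pow_two, mul_eq]
      have hleft : b * phi t g b = 1 := by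
        rw [phi_apply, hgv]
        rw [show b = Multiplicative.ofAdd (Multiplicative.toAdd b) from rfl]
        rw [← ofAdd_add]
        simp
      have hright : g * g = 1 := by
        ext
        push_cast
        have : (g : (Rr t)ˣ) = -1 := by simpa using hg
        rw [this]; simp
      rw [hleft, hright]
      rfl
    simpa using hsq
  | succ d ih =>
    intro g b hg
    have hsplit : (⟨b, g⟩ : Gg t) ^ (2 ^ (d + 1 + 1)) = ((⟨b, g⟩ : Gg t) ^ 2) ^ (2 ^ (d + 1)) := by
      rw [← pow_mul]
      congr 1
      ring
    rw [hsplit, pow_two, mul_eq]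
    refine ih (g * g) _ ?_
    have hcoe : ((g * g : ↥(Cgrp t)) : (Rr t)ˣ) = (g : (Rr t)ˣ) ^ 2 := by
      rw [pow_two]; rfl
    rw [hcoe, ← pow_mul, show 2 * 2 ^ d = 2 ^ (d + 1) by ring]
    exact hg

lemma orderOf_of_right_ne_one (ht : 1 ≤ t) (x : Gg t) (hx : x.right ≠ 1) :
    orderOf x ≤ 2 ^ (t + 1) := by
  obtain ⟨b, g⟩ := x
  have hgne : (g : (Rr t)ˣ) ≠ 1 := by
    intro h
    exact hx (by ext; simpa using h)
  have hdvd : orderOf (g : (Rr t)ˣ) ∣ 2 ^ (t + 1) := by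
    rw [← orderOf_w t ht]
    exact orderOf_dvd_of_mem_zpowers g.2
  obtain ⟨d, hdle, hord⟩ := (Nat.dvd_prime_pow Nat.prime_two).mp hdvd
  have hd0 : d ≠ 0 := by
    intro h
    rw [h, pow_zero] at hord
    exact hgne (orderOf_eq_one_iff.mp hord)
  set hh : (Rr t)ˣ := (g : (Rr t)ˣ) ^ (2 ^ (d - 1)) with hhdef
  have hh_sq : hh ^ 2 = 1 := by
    rw [hhdef, ← pow_mul, show 2 ^ (d - 1) * 2 = 2 ^ d by rw [← pow_succ]; congr 1; omega,
      ← hord, pow_orderOf_eq_one]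
  have hh_ne : hh ≠ 1 := by
    intro h
    have := orderOf_dvd_of_pow_eq_one h
    rw [hord] at this
    have hle := Nat.le_of_dvd (Nat.pow_pos (by norm_num)) this
    have : (2:ℕ) ^ (d - 1) < 2 ^ d := Nat.pow_lt_pow_right (by norm_num) (by omega)
    omega
  have hh_mem : hh ∈ Cgrp t := Subgroup.pow_mem _ g.2 _
  have hh_eq : hh = -1 := involution_eq_neg_one t ht hh hh_mem hh_sq hh_ne
  have hkey : (⟨b, g⟩ : Gg t) ^ (2 ^ (d - 1 + 1)) = 1 := key_pow t (d - 1) g b hh_eq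
  have : orderOf (⟨b, g⟩ : Gg t) ≤ 2 ^ (d - 1 + 1) :=
    orderOf_le_of_pow_eq_one (Nat.pow_pos (by norm_num)) hkey
  calc orderOf (⟨b, g⟩ : Gg t) ≤ 2 ^ (d - 1 + 1) := this
    _ ≤ 2 ^ (t + 1) := Nat.pow_le_pow_right (by norm_num) (by omega)

lemma pow_qq_left (ht : 1 ≤ t) (b : Multiplicative (Rr t)) : b ^ (qq t) = 1 := by
  haveI := charR t ht
  have : (qq t) • (Multiplicative.toAdd b) = 0 := by
    rw [nsmul_eq_mul, CharP.cast_eq_zero (Rr t) (qq t), zero_mul]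
  calc b ^ (qq t) = Multiplicative.ofAdd ((qq t) • Multiplicative.toAdd b) := rfl
    _ = 1 := by rw [this]; rfl

lemma orderOf_of_right_eq_one (ht : 1 ≤ t) (x : Gg t) (hx : x.right = 1) :
    orderOf x ≤ qq t := by
  obtain ⟨b, g⟩ := x
  have hg1 : g = 1 := hx
  subst hg1
  have : (⟨b, (1 : ↥(Cgrp t))⟩ : Gg t) = SemidirectProduct.inl b := rfl
  rw [this, orderOf_injective SemidirectProduct.inl SemidirectProduct.inl_injective b]
  exact orderOf_le_of_pow_eq_one (qq_pos t) (pow_qq_left t ht b)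

end GroupDef

section Counting

/-- the underlying equivalence with a product type -/
def eG : Gg t ≃ Multiplicative (Rr t) × ↥(Cgrp t) where
  toFun x := (x.left, x.right)
  invFun p := ⟨p.1, p.2⟩
  left_inv x := rfl
  right_inv p := rfl

lemma finG : Finite (Gg t) := by
  haveI : Finite (Rr t) := finR t
  exact Finite.of_equiv _ (eG t).symm

lemma cardC (ht : 1 ≤ t) : Nat.card ↥(Cgrp t) = 2 ^ (t + 1) := by
  rw [Cgrp, Nat.card_zpowers, orderOf_w t ht]

lemma cardG :
    Nat.card (Gg t) = Nat.card (Multiplicative (Rr t)) * Nat.card ↥(Cgrp t) := by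
  rw [Nat.card_congr (eG t), Nat.card_prod]

lemma right_pow_eq_one (ht : 1 ≤ t) (x : Gg t) : (x ^ (2 ^ (t + 1))).right = 1 := by
  have h1 : (x ^ (2 ^ (t + 1))).right = (x.right) ^ (2 ^ (t + 1)) := by
    rw [show (x ^ (2 ^ (t + 1))).right = SemidirectProduct.rightHom (x ^ (2 ^ (t + 1))) from rfl,
      map_pow]
    rfl
  rw [h1]
  have hdvd : orderOf (x.right) ∣ 2 ^ (t + 1) := by
    rw [← orderOf_injective (Cgrp t).subtype (Cgrp t).subtype_injective x.right,
      ← orderOf_w t ht]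
    exact orderOf_dvd_of_mem_zpowers (x.right).2
  exact orderOf_dvd_iff_pow_eq_one.mp hdvd

lemma isPGroupG (ht : 1 ≤ t) : IsPGroup 2 (Gg t) := by
  intro x
  refine ⟨(t + 1) + 2 * t, ?_⟩
  have hsplit : (2 : ℕ) ^ ((t + 1) + 2 * t) = 2 ^ (t + 1) * qq t := by
    rw [qq, pow_add]
  rw [hsplit, pow_mul]
  set y := x ^ (2 ^ (t + 1)) with hy
  have hyr : y.right = 1 := right_pow_eq_one t ht x
  have hyeq : y = SemidirectProduct.inl y.left := by
    ext
    · rfl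
    · rw [hyr]; rfl
  rw [hyeq, ← map_pow, pow_qq_left t ht, map_one]

lemma nilpotentG (ht : 1 ≤ t) : Group.IsNilpotent (Gg t) := by
  haveI : Finite (Gg t) := finG t
  exact (isPGroupG t ht).isNilpotent

lemma avg_nonneg (G : Type) [Group G] : 0 ≤ avgOrder G := by
  rw [avgOrder]
  apply div_nonneg
  · exact finsum_nonneg (fun x => by positivity)
  · positivity

lemma avgG_le (ht : 1 ≤ t) : avgOrder (Gg t) ≤ 2 ^ (t + 1) + 2 ^ (t - 1) := by
  haveI : Finite (Rr t) := finR t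
  haveI : Finite (Gg t) := finG t
  haveI : Fintype (Gg t) := Fintype.ofFinite _
  haveI : Fintype (Multiplicative (Rr t)) := Fintype.ofFinite _
  haveI : Fintype ↥(Cgrp t) := Fintype.ofFinite _
  have hterm : ∀ x : Gg t,
      (orderOf x : ℝ) ≤ 2 ^ (t + 1) + (if x.right = 1 then (qq t : ℝ) else 0) := by
    intro x
    by_cases hx : x.right = 1
    · rw [if_pos hx]
      have h1 := orderOf_of_right_eq_one t ht x hx
      have h2 : (orderOf x : ℝ) ≤ (qq t : ℝ) := by exact_mod_cast h1
      have h3 : (0:ℝ) ≤ 2 ^ (t + 1) := by positivity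
      linarith
    · rw [if_neg hx]
      have h1 := orderOf_of_right_ne_one t ht x hx
      have h2 : (orderOf x : ℝ) ≤ 2 ^ (t + 1) := by exact_mod_cast h1
      linarith
  have hite : (∑ x : Gg t, (if x.right = 1 then (qq t : ℝ) else 0))
      = (Fintype.card (Multiplicative (Rr t))) * (qq t : ℝ) := by
    have hb := Fintype.sum_bijective (eG t) (eG t).bijective
      (fun x : Gg t => if x.right = 1 then (qq t : ℝ) else 0)
      (fun p : Multiplicative (Rr t) × ↥(Cgrp t) => if p.2 = 1 then (qq t : ℝ) else 0)
      (fun x => rfl)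
    rw [hb, Fintype.sum_prod_type]
    have hinner : ∀ b : Multiplicative (Rr t),
        (∑ g : ↥(Cgrp t), (if g = 1 then (qq t : ℝ) else 0)) = (qq t : ℝ) := by
      intro b
      rw [Finset.sum_ite_eq' Finset.univ (1 : ↥(Cgrp t)) (fun _ => (qq t : ℝ))]
      simp
    rw [Finset.sum_congr rfl (fun b _ => hinner b), Finset.sum_const, Finset.card_univ,
      nsmul_eq_mul]
  have hsum : (∑ x : Gg t, (orderOf x : ℝ))
      ≤ (Nat.card (Gg t)) * 2 ^ (t + 1) + (Nat.card (Multiplicative (Rr t))) * (qq t : ℝ) := by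
    calc (∑ x : Gg t, (orderOf x : ℝ))
        ≤ ∑ x : Gg t, (2 ^ (t + 1) + (if x.right = 1 then (qq t : ℝ) else 0)) :=
          Finset.sum_le_sum (fun x _ => hterm x)
      _ = (Fintype.card (Gg t)) * 2 ^ (t + 1)
          + ∑ x : Gg t, (if x.right = 1 then (qq t : ℝ) else 0) := by
          rw [Finset.sum_add_distrib, Finset.sum_const, Finset.card_univ, nsmul_eq_mul]
      _ = (Nat.card (Gg t)) * 2 ^ (t + 1) + (Nat.card (Multiplicative (Rr t))) * (qq t : ℝ) := by
          rw [hite, Nat.card_eq_fintype_card, Nat.card_eq_fintype_card]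
  have hposR : 0 < (Nat.card (Multiplicative (Rr t)) : ℝ) := by
    have : 0 < Nat.card (Multiplicative (Rr t)) := Nat.card_pos
    exact_mod_cast this
  have hcardG : (Nat.card (Gg t) : ℝ) = (Nat.card (Multiplicative (Rr t)) : ℝ) * 2 ^ (t + 1) := by
    rw [cardG t, cardC t ht]
    push_cast
    ring
  have hposG : 0 < (Nat.card (Gg t) : ℝ) := by
    rw [hcardG]; positivity
  have hq : (qq t : ℝ) = 2 ^ (t - 1) * 2 ^ (t + 1) := by
    rw [qq]
    push_cast
    rw [← pow_add]
    congr 1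
    omega
  rw [avgOrder, finsum_eq_sum_of_fintype, div_le_iff₀ hposG]
  calc (∑ x : Gg t, (orderOf x : ℝ))
      ≤ (Nat.card (Gg t)) * 2 ^ (t + 1) + (Nat.card (Multiplicative (Rr t))) * (qq t : ℝ) := hsum
    _ = (2 ^ (t + 1) + 2 ^ (t - 1)) * (Nat.card (Gg t)) := by
        rw [hcardG, hq]; ring

end Counting

section Hsub

/-- the generator of the cyclic subgroup -/
noncomputable def zz : Gg t := SemidirectProduct.inl (Multiplicative.ofAdd (1 : Rr t))

lemma orderOf_zz (ht : 1 ≤ t) : orderOf (zz t) = qq t := by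
  rw [zz, orderOf_injective SemidirectProduct.inl SemidirectProduct.inl_injective,
    orderOf_ofAdd_eq_addOrderOf]
  exact CharP.eq (Rr t) (CharP.addOrderOf_one (Rr t)) (charR t ht)

/-- the big cyclic subgroup -/
noncomputable def Hh : Subgroup (Gg t) := Subgroup.zpowers (zz t)

lemma cardH (ht : 1 ≤ t) : Nat.card ↥(Hh t) = qq t := by
  rw [Hh, Nat.card_zpowers, orderOf_zz t ht]

lemma avgH_ge (ht : 1 ≤ t) : (2 : ℝ) ^ (2 * t - 1) ≤ avgOrder ↥(Hh t) := by
  haveI : Finite (Rr t) := finR t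
  haveI : Finite (Gg t) := finG t
  haveI : Fintype ↥(Hh t) := Fintype.ofFinite _
  have h2 : 2 ^ (2 * t - 1) * 2 = qq t := by
    rw [qq, ← pow_succ]
    congr 1
    omega
  set ff : Fin (2 ^ (2 * t - 1)) → ↥(Hh t) := fun i =>
    ⟨(zz t) ^ (2 * (i : ℕ) + 1), Subgroup.pow_mem _ (Subgroup.mem_zpowers _) _⟩ with hff
  have hord : ∀ i, orderOf (ff i) = qq t := by
    intro i
    have h1 : orderOf (ff i) = orderOf ((zz t) ^ (2 * (i : ℕ) + 1)) := by
      rw [← orderOf_injective (Hh t).subtype (Hh t).subtype_injective (ff i)]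
      rfl
    rw [h1, orderOf_pow, orderOf_zz t ht]
    have hcop : Nat.Coprime (qq t) (2 * (i : ℕ) + 1) := by
      rw [qq]
      exact Nat.Coprime.pow_left _ (Nat.coprime_two_left.mpr (Nat.odd_iff.mpr (by omega)))
    rw [Nat.Coprime.gcd_eq_one (Nat.Coprime.symm hcop).symm, Nat.div_one]
  have hinj : Function.Injective ff := by
    intro i j hij
    have h1 : (zz t) ^ (2 * (i : ℕ) + 1) = (zz t) ^ (2 * (j : ℕ) + 1) := by
      have := congrArg (fun y : ↥(Hh t) => (y : Gg t)) hij
      simpa [hff] using this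
    rw [pow_eq_pow_iff_modEq, orderOf_zz t ht] at h1
    have hi : 2 * (i : ℕ) + 1 < qq t := by have := i.2; omega
    have hj : 2 * (j : ℕ) + 1 < qq t := by have := j.2; omega
    have := h1.eq_of_lt_of_lt hi hj
    ext
    omega
  have hsub : (Finset.univ.image ff) ⊆ Finset.univ := Finset.subset_univ _
  have hsum : (2 : ℝ) ^ (2 * t - 1) * (qq t : ℝ) ≤ ∑ h : ↥(Hh t), (orderOf h : ℝ) := by
    calc (2 : ℝ) ^ (2 * t - 1) * (qq t : ℝ)
        = ∑ _i : Fin (2 ^ (2 * t - 1)), (qq t : ℝ) := by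
          rw [Finset.sum_const, Finset.card_univ, Fintype.card_fin, nsmul_eq_mul]
          push_cast
          ring
      _ = ∑ i : Fin (2 ^ (2 * t - 1)), (orderOf (ff i) : ℝ) := by
          refine Finset.sum_congr rfl (fun i _ => ?_)
          rw [hord i]
      _ = ∑ h ∈ Finset.univ.image ff, (orderOf h : ℝ) := by
          rw [Finset.sum_image (fun i _ j _ h => hinj h)]
      _ ≤ ∑ h : ↥(Hh t), (orderOf h : ℝ) :=
          Finset.sum_le_sum_of_subset_of_nonneg hsub (fun h _ _ => by positivity)
  rw [avgOrder, finsum_eq_sum_of_fintype, cardH t ht]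
  rw [le_div_iff₀ (by exact_mod_cast qq_pos t)]
  calc (2:ℝ) ^ (2 * t - 1) * (qq t : ℝ) ≤ ∑ h : ↥(Hh t), (orderOf h : ℝ) := hsum
    _ = _ := rfl

end Hsub

end AvgOrderNilpotentAux

theorem avgOrder_ratio_nilpotent_lt :
    ∀ ε : ℝ, 0 < ε →
      ∃ (G : Type) (_ : Group G), Finite G ∧ Group.IsNilpotent G ∧
        ∃ H : Subgroup G, avgOrder G / avgOrder H < ε := by
  intro ε hε
  obtain ⟨n, hn⟩ := pow_unbounded_of_one_lt (8 / ε) (one_lt_two : (1:ℝ) < 2)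
  set t := n + 1 with htdef
  have ht : 1 ≤ t := by omega
  have hn2 : 8 / ε < 2 ^ t :=
    lt_of_lt_of_le hn (pow_le_pow_right₀ one_le_two (by omega))
  refine ⟨AvgOrderNilpotentAux.Gg t, inferInstance, AvgOrderNilpotentAux.finG t,
    AvgOrderNilpotentAux.nilpotentG t ht, AvgOrderNilpotentAux.Hh t, ?_⟩
  have h1 := AvgOrderNilpotentAux.avgG_le t ht
  have h2 := AvgOrderNilpotentAux.avgH_ge t ht
  have h3 : (0:ℝ) < 2 ^ (2 * t - 1) := by positivity
  have h4 : avgOrder (AvgOrderNilpotentAux.Gg t) / avgOrder ↥(AvgOrderNilpotentAux.Hh t)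
      ≤ ((2:ℝ) ^ (t + 1) + 2 ^ (t - 1)) / 2 ^ (2 * t - 1) := by
    refine div_le_div₀ ?_ h1 h3 h2
    positivity
  refine lt_of_le_of_lt h4 ?_
  have hb : (2:ℝ) ^ (t + 1) + 2 ^ (t - 1) ≤ 2 ^ (t + 2) := by
    have e1 : (2:ℝ) ^ (t + 2) = 2 ^ (t + 1) + 2 ^ (t + 1) := by rw [pow_succ]; ring
    have e2 : (2:ℝ) ^ (t - 1) ≤ 2 ^ (t + 1) := pow_le_pow_right₀ one_le_two (by omega)
    linarith
  have heq : (2:ℝ) ^ (t + 2) / 2 ^ (2 * t - 1) = 8 / 2 ^ t := by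
    rw [div_eq_div_iff (by positivity) (by positivity), ← pow_add,
      show (8:ℝ) = 2 ^ 3 by norm_num, ← pow_add]
    congr 1
    omega
  calc ((2:ℝ) ^ (t + 1) + 2 ^ (t - 1)) / 2 ^ (2 * t - 1)
      ≤ (2:ℝ) ^ (t + 2) / 2 ^ (2 * t - 1) := div_le_div₀ (by positivity) hb h3 le_rfl
    _ = 8 / 2 ^ t := heq
    _ < ε := by
        rw [div_lt_iff₀ (by positivity)]
        rw [div_lt_iff₀ hε] at hn2
        nlinarith
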